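/- arXiv:1402.5305 — 3 statements merged into one kernel-verified Lean document; each statement's English description precedes it below -/
import Mathlib

section
/- Let F be a finite field of characteristic 2 with |F| ≥ 4, and let t be an affine transformation of V = F² of the form t(v) = A·v + c with A ∈ SL(2,F) and c ∈ F², with t not the identity. If t fixes at least two points of V, then t fixes exactly |F| points of V and t∘t is the identity. -/
/-- Let `F` be a finite field of characteristic 2 with `|F| ≥ 4`, and let
`t(v) = A·v + c` with `A ∈ SL(2,F)`, `c ∈ F²`, and `t` not the identity. If `t` fixes at
least two points of `V = F²` then it fixes exactly `|F|` points and `t∘t = id`. -/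
theorem twisted_stmt15 {F : Type*} [Field F] [Fintype F] [CharP F 2]
    (hcard : 4 ≤ Fintype.card F)
    (A : Matrix (Fin 2) (Fin 2) F) (hA : A.det = 1) (c : Fin 2 → F)
    (hne : (fun v : Fin 2 → F => A.mulVec v + c) ≠ id)
    (hfix : ∃ v₁ v₂ : Fin 2 → F, v₁ ≠ v₂ ∧
      A.mulVec v₁ + c = v₁ ∧ A.mulVec v₂ + c = v₂) :
    Nat.card {v : Fin 2 → F | A.mulVec v + c = v} = Fintype.card F ∧
    ∀ v : Fin 2 → F, A.mulVec (A.mulVec v + c) + c = v := by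
  obtain ⟨v₁, v₂, hv, h1, h2⟩ := hfix
  have two : (2 : F) = 0 := by exact_mod_cast CharP.cast_eq_zero F 2
  have addself : ∀ x : F, x + x = 0 := fun x => by linear_combination x * two
  set B : Matrix (Fin 2) (Fin 2) F := A + 1 with hB
  -- B v₁ = c
  have hBv1 : B.mulVec v₁ = c := by
    funext i
    have h1i := congrFun h1 i
    simp only [hB, Matrix.add_mulVec, Matrix.one_mulVec, Pi.add_apply] at *
    linear_combination h1i + (v₁ i) * two - (c i) * two
  -- w = v₁ + v₂ is a nonzero kernel vector of B
  have hw : v₁ + v₂ ≠ 0 := by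
    intro h
    apply hv
    funext i
    have hi := congrFun h i
    simp only [Pi.add_apply, Pi.zero_apply] at hi
    linear_combination hi - (v₂ i) * two
  have hBw : B.mulVec (v₁ + v₂) = 0 := by
    funext i
    have h1i := congrFun h1 i
    have h2i := congrFun h2 i
    simp only [hB, Matrix.add_mulVec, Matrix.one_mulVec, Matrix.mulVec_add,
      Pi.add_apply, Pi.zero_apply] at *
    linear_combination h1i + h2i + (v₁ i + v₂ i) * two - (c i) * two
  -- det B = 0, hence trace(A) = 0
  have hdB : B.det = 0 := (Matrix.exists_mulVec_eq_zero_iff).mp ⟨v₁ + v₂, hw, hBw⟩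
  have hdet : A 0 0 * A 1 1 - A 0 1 * A 1 0 = 1 := by
    rw [Matrix.det_fin_two] at hA; exact hA
  have hdB' : (A 0 0 + 1) * (A 1 1 + 1) - A 0 1 * A 1 0 = 0 := by
    rw [Matrix.det_fin_two] at hdB
    simpa [hB, Matrix.one_apply] using hdB
  have htr : A 0 0 + A 1 1 = 0 := by linear_combination hdB' - hdet - two
  -- B * B = 0 (Cayley–Hamilton)
  have hBB : B * B = 0 := by
    have hBe : B = !![A 0 0 + 1, A 0 1; A 1 0, A 1 1 + 1] := by
      rw [Matrix.eta_fin_two B]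
      simp [hB, Matrix.one_apply]
    rw [hBe, Matrix.mul_fin_two]
    have e00 : (A 0 0 + 1) * (A 0 0 + 1) + A 0 1 * A 1 0 = 0 := by
      linear_combination -hdet + (A 0 0) * htr + (A 0 0) * two
    have e01 : (A 0 0 + 1) * A 0 1 + A 0 1 * (A 1 1 + 1) = 0 := by
      linear_combination (A 0 1) * htr + (A 0 1) * two
    have e10 : A 1 0 * (A 0 0 + 1) + (A 1 1 + 1) * A 1 0 = 0 := by
      linear_combination (A 1 0) * htr + (A 1 0) * two
    have e11 : A 1 0 * A 0 1 + (A 1 1 + 1) * (A 1 1 + 1) = 0 := by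
      linear_combination -hdet + (A 1 1) * htr + (A 1 1) * two
    rw [e00, e01, e10, e11]
    ext i j
    fin_cases i <;> fin_cases j <;> rfl
  -- B c = 0
  have hBc : B.mulVec c = 0 := by
    rw [← hBv1, Matrix.mulVec_mulVec, hBB, Matrix.zero_mulVec]
  -- A * A = 1
  have hAA : A * A = 1 := by
    have h2B : B + B = 0 := by
      ext i j
      simpa using addself (B i j)
    have hmm : A * A = B * B - (B + B) + 1 := by
      rw [hB]; noncomm_ring
    rw [hmm, hBB, h2B, sub_zero, zero_add]
  -- second conclusion
  have hsq : ∀ v : Fin 2 → F, A.mulVec (A.mulVec v + c) + c = v := by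
    intro v
    have hAc : A.mulVec c + c = 0 := by
      have := hBc
      simpa [hB, Matrix.add_mulVec, Matrix.one_mulVec] using this
    calc A.mulVec (A.mulVec v + c) + c
        = (A * A).mulVec v + (A.mulVec c + c) := by
          rw [Matrix.mulVec_add, Matrix.mulVec_mulVec]; abel
      _ = v := by rw [hAA, hAc, Matrix.one_mulVec, add_zero]
  refine ⟨?_, hsq⟩
  -- counting fixed points
  have hBne : B ≠ 0 := by
    intro h0
    apply hne
    have hAv : ∀ v : Fin 2 → F, A.mulVec v = v := by
      intro v
      funext i
      have := congrFun (congrFun h0 i)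
      have hz : B.mulVec v = 0 := by rw [h0, Matrix.zero_mulVec]
      have hzi := congrFun hz i
      simp only [hB, Matrix.add_mulVec, Matrix.one_mulVec, Pi.add_apply,
        Pi.zero_apply] at hzi
      linear_combination hzi - (v i) * two
    have hc0 : c = 0 := by
      have := h1
      rw [hAv v₁] at this
      funext i
      have hi := congrFun this i
      simp only [Pi.add_apply] at hi
      simp only [Pi.zero_apply]
      linear_combination hi
    funext v
    simp [hAv v, hc0]
  -- the kernel of B has dimension 1
  set K := LinearMap.ker B.mulVecLin with hK
  have hwK : (v₁ + v₂) ∈ K := by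
    simp only [hK, LinearMap.mem_ker, Matrix.mulVecLin_apply]
    exact hBw
  have hKbot : K ≠ ⊥ := by
    intro h
    rw [h, Submodule.mem_bot] at hwK
    exact hw hwK
  have hKtop : K ≠ ⊤ := by
    intro h
    apply hBne
    ext i j
    have : B.mulVec (Pi.single j 1) = 0 := by
      have : (Pi.single j 1 : Fin 2 → F) ∈ K := by rw [h]; trivial
      simpa only [hK, LinearMap.mem_ker, Matrix.mulVecLin_apply] using this
    have := congrFun this i
    simpa using this
  have hfin : Module.finrank F K = 1 := by
    have hlt : Module.finrank F K < 2 := by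
      have := Submodule.finrank_lt (K := F) (V := Fin 2 → F) hKtop
      simpa [Module.finrank_fin_fun] using this
    have hpos : 0 < Module.finrank F K := by
      rw [Module.finrank_pos_iff]
      exact nontrivial_of_ne ⟨v₁ + v₂, hwK⟩ 0 (by simpa [Submodule.mk_eq_zero] using hw)
    omega
  haveI : Fintype K := Fintype.ofFinite K
  have hcardK : Nat.card K = Fintype.card F := by
    rw [Nat.card_eq_fintype_card, Module.card_eq_pow_finrank (K := F) (V := K), hfin, pow_one]
  -- bijection between fixed points and kernel
  have hmem : ∀ v : Fin 2 → F, (A.mulVec v + c = v) ↔ B.mulVec v = c := by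
    intro v
    constructor
    · intro h
      funext i
      have hi := congrFun h i
      simp only [hB, Matrix.add_mulVec, Matrix.one_mulVec, Pi.add_apply] at hi ⊢
      linear_combination hi + (v i) * two - (c i) * two
    · intro h
      funext i
      have hi := congrFun h i
      simp only [hB, Matrix.add_mulVec, Matrix.one_mulVec, Pi.add_apply] at hi ⊢
      linear_combination hi - (v i) * two + (c i) * two
  have e : {v : Fin 2 → F | A.mulVec v + c = v} ≃ K :=
    { toFun := fun x => ⟨x.1 + v₁, by
        have hx := (hmem x.1).mp x.2
        simp only [hK, LinearMap.mem_ker, Matrix.mulVecLin_apply, Matrix.mulVec_add, hx, hBv1]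
        funext i
        simpa using addself (c i)⟩
      invFun := fun x => ⟨x.1 + v₁, by
        have hx : B.mulVec x.1 = 0 := by
          simpa only [hK, LinearMap.mem_ker, Matrix.mulVecLin_apply] using x.2
        refine Set.mem_setOf.mpr ((hmem _).mpr ?_)
        rw [Matrix.mulVec_add, hx, hBv1, zero_add]⟩
      left_inv := fun x => by
        ext i
        simp only [Pi.add_apply]
        linear_combination (v₁ i) * two
      right_inv := fun x => by
        ext i
        simp only [Pi.add_apply]
        linear_combination (v₁ i) * two }
  rw [Nat.card_congr e, hcardK]
end

section
/- Let F be a finite field of characteristic 2 with |F| ≥ 4, and let t be a non-identity affine transformation of V = F² of the form t(v) = A·v + c with A ∈ SL(2,F) and c ∈ F². If the order of t (as a permutation of V) is odd, then t fixes exactly one point of V. -/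
/-- Let `F` be a finite field of characteristic 2 with `|F| ≥ 4`, and let
`t(v) = A·v + c` with `A ∈ SL(2,F)`, `c ∈ F²`, and `t` not the identity. If the order of
`t` as a permutation of `V = F²` (the least `n ≥ 1` with `t^[n] = id`) is odd, then `t`
fixes exactly one point of `V`. -/
theorem twisted_stmt17 {F : Type*} [Field F] [Fintype F] [CharP F 2]
    (hcard : 4 ≤ Fintype.card F)
    (A : Matrix (Fin 2) (Fin 2) F) (hA : A.det = 1) (c : Fin 2 → F)
    (hne : (fun v : Fin 2 → F => A.mulVec v + c) ≠ id)
    (n : ℕ) (hn : 0 < n)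
    (hiter : (fun v : Fin 2 → F => A.mulVec v + c)^[n] = id)
    (hleast : ∀ m : ℕ, 0 < m → m < n →
      (fun v : Fin 2 → F => A.mulVec v + c)^[m] ≠ id)
    (hodd : Odd n) :
    Nat.card {v : Fin 2 → F | A.mulVec v + c = v} = 1 := by
  have h2 : (2 : F) = 0 := by
    have := CharP.cast_eq_zero F 2
    exact_mod_cast this
  rw [Matrix.det_fin_two] at hA
  have hdet : (A - 1).det = A 0 0 + A 1 1 := by
    rw [Matrix.det_fin_two]
    simp only [Matrix.sub_apply, Matrix.one_apply_eq, Matrix.one_apply_ne (by decide : (0:Fin 2) ≠ 1),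
      Matrix.one_apply_ne (by decide : (1:Fin 2) ≠ 0), sub_zero]
    linear_combination hA + (1 - A 0 0 - A 1 1) * h2
  by_cases htr : A 0 0 + A 1 1 = 0
  · -- trace zero case: A² = 1, so t has order dividing 4, contradiction with odd order
    exfalso
    have hA2 : A * A = 1 := by
      ext i j
      fin_cases i <;> fin_cases j <;>
        simp [Matrix.mul_apply, Fin.sum_univ_two, Matrix.one_apply]
      · linear_combination A 0 0 * htr - hA - h2
      · linear_combination A 0 1 * htr
      · linear_combination A 1 0 * htr
      · linear_combination A 1 1 * htr - hA - h2
    set t : (Fin 2 → F) → (Fin 2 → F) := fun v => A.mulVec v + c with ht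
    have hself : ∀ x : Fin 2 → F, x + x = 0 := by
      intro x; funext i
      simp only [Pi.add_apply, Pi.zero_apply]
      linear_combination x i * h2
    have ht2 : ∀ v, t (t v) = v + (A.mulVec c + c) := by
      intro v
      simp only [ht, Matrix.mulVec_add, Matrix.mulVec_mulVec, hA2, Matrix.one_mulVec]
      abel
    have ht4 : t^[4] = id := by
      funext v
      show t (t (t (t v))) = v
      rw [ht2, ht2, add_assoc, hself, add_zero]
    have hmod : t^[n % 4] = id := by
      have hn4 : n = 4 * (n / 4) + n % 4 := (Nat.div_add_mod n 4).symm
      have : t^[n] = t^[n % 4] := by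
        nth_rewrite 1 [hn4]
        rw [Function.iterate_add, Function.iterate_mul, ht4, Function.iterate_id]
        exact Function.id_comp _
      rw [← this]; exact hiter
    have hodd2 : n % 2 = 1 := Nat.odd_iff.mp hodd
    have : n % 4 = 1 ∨ n % 4 = 3 := by omega
    rcases this with h | h
    · rw [h, Function.iterate_one] at hmod
      exact hne hmod
    · rw [h] at hmod
      have : t^[4] = t ∘ t^[3] := by
        rw [show (4 : ℕ) = 3 + 1 from rfl, Function.iterate_succ']
      rw [hmod, ht4, Function.comp_id] at this
      exact hne this.symm
  · -- trace nonzero: A - 1 invertible, unique fixed point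
    have hdu : IsUnit (A - 1).det := by
      rw [hdet]; exact isUnit_iff_ne_zero.mpr htr
    set w : Fin 2 → F := (A - 1)⁻¹.mulVec c with hw
    have hkey : ∀ v : Fin 2 → F, A.mulVec v + c = v ↔ v = w := by
      intro v
      constructor
      · intro h
        have h1 : (A - 1).mulVec v = c := by
          rw [Matrix.sub_mulVec, Matrix.one_mulVec]
          funext i
          have hi : A.mulVec v i + c i = v i := congrFun h i
          simp only [Pi.sub_apply]
          linear_combination hi - c i * h2
        rw [hw, ← h1, Matrix.mulVec_mulVec, Matrix.nonsing_inv_mul _ hdu,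
          Matrix.one_mulVec]
      · intro h
        subst h
        have hBw : (A - 1).mulVec w = c := by
          rw [hw, Matrix.mulVec_mulVec, Matrix.mul_nonsing_inv _ hdu, Matrix.one_mulVec]
        have hAw : A.mulVec w = c + w := by
          have : A = (A - 1) + 1 := by abel
          rw [this, Matrix.add_mulVec, hBw, Matrix.one_mulVec]
        rw [hAw]
        funext i
        simp only [Pi.add_apply]
        linear_combination c i * h2
    have hset : {v : Fin 2 → F | A.mulVec v + c = v} = {w} := by
      ext v
      simp only [Set.mem_setOf_eq, Set.mem_singleton_iff]
      exact hkey v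
    rw [hset]
    simp
end

section
/- Let F be a finite field of characteristic 2 with |F| ≥ 4, and let t be an affine transformation of V = F² of the form t(v) = A·v + c with A ∈ SL(2,F) and c ∈ F². If the order of t (as a permutation of V) is even and strictly greater than 2, then t has no fixed points in V. -/
/-- Let `F` be a finite field of characteristic 2 with `|F| ≥ 4`, and let
`t(v) = A·v + c` with `A ∈ SL(2,F)` and `c ∈ F²`. If the order of `t` as a permutation of
`V = F²` (the least `n ≥ 1` with `t^[n] = id`) is even and strictly greater than `2`, then
`t` has no fixed points in `V`. -/
theorem twisted_stmt18 {F : Type*} [Field F] [Fintype F] [CharP F 2]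
    (hcard : 4 ≤ Fintype.card F)
    (A : Matrix (Fin 2) (Fin 2) F) (hA : A.det = 1) (c : Fin 2 → F)
    (n : ℕ) (hn : 0 < n)
    (hiter : (fun v : Fin 2 → F => A.mulVec v + c)^[n] = id)
    (hleast : ∀ m : ℕ, 0 < m → m < n →
      (fun v : Fin 2 → F => A.mulVec v + c)^[m] ≠ id)
    (heven : Even n) (h2 : 2 < n) :
    {v : Fin 2 → F | A.mulVec v + c = v} = ∅ := by
  rw [Set.eq_empty_iff_forall_notMem]
  intro v hv
  simp only [Set.mem_setOf_eq] at hv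
  set t : (Fin 2 → F) → (Fin 2 → F) := fun w => A.mulVec w + c with ht
  have h2F : (2 : F) = 0 := by
    exact_mod_cast CharP.cast_eq_zero F 2
  have haddself : ∀ x : F, x + x = 0 := fun x => by
    have : x + x = 2 * x := by ring
    rw [this, h2F, zero_mul]
  have hvv : v + v = 0 := funext fun i => haddself (v i)
  have key : ∀ (m : ℕ) (w : Fin 2 → F),
      t^[m] w = (A ^ m).mulVec (w + v) + v := by
    intro m
    induction m with
    | zero =>
      intro w
      simp [Matrix.one_mulVec, add_assoc, hvv]
    | succ m ih =>
      intro w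
      rw [Function.iterate_succ_apply', ih]
      show A.mulVec ((A ^ m).mulVec (w + v) + v) + c = _
      rw [Matrix.mulVec_add, Matrix.mulVec_mulVec, add_assoc, hv, ← pow_succ']
  have iter_eq_id : ∀ m : ℕ, A ^ m = 1 → t^[m] = id := by
    intro m hm
    funext w
    rw [key, hm, Matrix.one_mulVec, add_assoc, hvv, add_zero, id]
  have hAn : A ^ n = 1 := by
    have h : ∀ u, (A ^ n).mulVec u = u := by
      intro u
      have h1 := congrFun hiter (u + v)
      rw [key] at h1
      have h2' : (A ^ n).mulVec (u + (v + v)) + v = u + v := by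
        rw [← add_assoc]; exact h1
      rw [hvv, add_zero] at h2'
      exact add_right_cancel h2'
    apply Matrix.toLin'.injective
    apply LinearMap.ext
    intro u
    rw [Matrix.toLin'_apply, h]; simp
  obtain ⟨k, hk⟩ := heven
  have hBB : A ^ k * A ^ k = 1 := by rw [← pow_add, ← hk]; exact hAn
  have hBne : A ^ k ≠ 1 := by
    intro h1
    exact hleast k (by omega) (by omega) (iter_eq_id k h1)
  have hcomm : A * A ^ k = A ^ k * A := ((Commute.refl A).pow_right k).eq
  have hdet : A 0 0 * A 1 1 - A 0 1 * A 1 0 = 1 := by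
    rw [← Matrix.det_fin_two]; exact hA
  -- entries of B := A ^ k
  have b00 : (A ^ k) 0 0 * (A ^ k) 0 0 + (A ^ k) 0 1 * (A ^ k) 1 0 = 1 := by
    have := Matrix.ext_iff.mpr hBB 0 0
    simpa [Matrix.mul_apply, Fin.sum_univ_two, Matrix.one_apply] using this
  have b01 : (A ^ k) 0 0 * (A ^ k) 0 1 + (A ^ k) 0 1 * (A ^ k) 1 1 = 0 := by
    have := Matrix.ext_iff.mpr hBB 0 1
    simpa [Matrix.mul_apply, Fin.sum_univ_two, Matrix.one_apply] using this
  have b10 : (A ^ k) 1 0 * (A ^ k) 0 0 + (A ^ k) 1 1 * (A ^ k) 1 0 = 0 := by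
    have := Matrix.ext_iff.mpr hBB 1 0
    simpa [Matrix.mul_apply, Fin.sum_univ_two, Matrix.one_apply] using this
  have b11 : (A ^ k) 1 0 * (A ^ k) 0 1 + (A ^ k) 1 1 * (A ^ k) 1 1 = 1 := by
    have := Matrix.ext_iff.mpr hBB 1 1
    simpa [Matrix.mul_apply, Fin.sum_univ_two, Matrix.one_apply] using this
  have cAB01 : A 0 0 * (A ^ k) 0 1 + A 0 1 * (A ^ k) 1 1
      = (A ^ k) 0 0 * A 0 1 + (A ^ k) 0 1 * A 1 1 := by
    have := Matrix.ext_iff.mpr hcomm 0 1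
    simpa [Matrix.mul_apply, Fin.sum_univ_two] using this
  have cAB10 : A 1 0 * (A ^ k) 0 0 + A 1 1 * (A ^ k) 1 0
      = (A ^ k) 1 0 * A 0 0 + (A ^ k) 1 1 * A 1 0 := by
    have := Matrix.ext_iff.mpr hcomm 1 0
    simpa [Matrix.mul_apply, Fin.sum_univ_two] using this
  have htr : A 0 0 = A 1 1 := by
    by_cases hq : (A ^ k) 0 1 = 0
    · by_cases hr : (A ^ k) 1 0 = 0
      · exfalso
        apply hBne
        have hp : (A ^ k) 0 0 = 1 := by
          have hsq : ((A ^ k) 0 0 - 1) * ((A ^ k) 0 0 - 1) = 0 := by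
            linear_combination b00 - (A ^ k) 0 1 * hr + (1 - (A ^ k) 0 0) * h2F
          exact sub_eq_zero.mp (mul_self_eq_zero.mp hsq)
        have hs : (A ^ k) 1 1 = 1 := by
          have hsq : ((A ^ k) 1 1 - 1) * ((A ^ k) 1 1 - 1) = 0 := by
            linear_combination b11 - (A ^ k) 1 0 * hq + (1 - (A ^ k) 1 1) * h2F
          exact sub_eq_zero.mp (mul_self_eq_zero.mp hsq)
        ext i j
        fin_cases i <;> fin_cases j <;>
          simp [hp, hs, hq, hr, Matrix.one_apply]
      · -- r ≠ 0
        have hps : (A ^ k) 0 0 + (A ^ k) 1 1 = 0 := by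
          have : (A ^ k) 1 0 * ((A ^ k) 0 0 + (A ^ k) 1 1) = 0 := by
            linear_combination b10
          rcases mul_eq_zero.mp this with h | h
          · exact absurd h hr
          · exact h
        have : (A ^ k) 1 0 * (A 1 1 - A 0 0) = 0 := by
          linear_combination cAB10 + A 1 0 * hps - A 1 0 * (A ^ k) 0 0 * h2F
        rcases mul_eq_zero.mp this with h | h
        · exact absurd h hr
        · exact (sub_eq_zero.mp h).symm
    · -- q ≠ 0
      have hps : (A ^ k) 0 0 + (A ^ k) 1 1 = 0 := by
        have : (A ^ k) 0 1 * ((A ^ k) 0 0 + (A ^ k) 1 1) = 0 := by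
          linear_combination b01
        rcases mul_eq_zero.mp this with h | h
        · exact absurd h hq
        · exact h
      have : (A ^ k) 0 1 * (A 0 0 - A 1 1) = 0 := by
        linear_combination cAB01 + A 0 1 * hps - A 0 1 * (A ^ k) 1 1 * h2F
      rcases mul_eq_zero.mp this with h | h
      · exact absurd h hq
      · exact sub_eq_zero.mp h
  have hAA : A * A = 1 := by
    ext i j
    fin_cases i <;> fin_cases j <;>
      simp [Matrix.mul_apply, Fin.sum_univ_two, Matrix.one_apply]
    · linear_combination hdet + A 0 0 * htr + A 0 1 * A 1 0 * h2F
    · linear_combination A 0 1 * htr + A 0 1 * A 1 1 * h2F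
    · linear_combination A 1 0 * htr + A 1 0 * A 1 1 * h2F
    · linear_combination hdet - A 1 1 * htr + A 0 1 * A 1 0 * h2F
  exact hleast 2 (by norm_num) h2 (iter_eq_id 2 (by rw [pow_two]; exact hAA))
end
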